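/- For every natural number n ≥ 1, Σ_{k=0}^n (k!·(n-k)/2^k) · C(n,k)^2 · ( N^{↓(n-k-1)} - (-1)^k (N+n-k)^{↓(n-k-1)} ) = 0 as a polynomial identity in N. -/

import Mathlib

open Polynomial Finset

noncomputable def ffq (Y : ℚ[X]) (m : ℕ) : ℚ[X] := ∏ j ∈ Finset.range m, (Y - (j : ℚ[X]))

lemma ffq_zero (Y : ℚ[X]) : ffq Y 0 = 1 := by simp [ffq]

lemma ffq_succ (Y : ℚ[X]) (m : ℕ) : ffq Y (m + 1) = ffq Y m * (Y - (m : ℚ[X])) := by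
  simp [ffq, Finset.prod_range_succ]

lemma ffq_shift (Y : ℚ[X]) (m : ℕ) : ffq (Y + 1) (m + 1) = ffq Y m * (Y + 1) := by
  rw [ffq, Finset.prod_range_succ']
  congr 1
  · apply Finset.prod_congr rfl
    intro j _
    push_cast
    ring
  · simp

lemma ffq_diff (Y : ℚ[X]) (m : ℕ) :
    ffq (Y + 1) (m + 1) - ffq Y (m + 1) = ((m : ℚ[X]) + 1) * ffq Y m := by
  rw [ffq_shift, ffq_succ]
  ring

lemma ffq_natCast (c : ℕ) : ∀ d : ℕ, ffq ((c : ℚ[X])) d = ((c.descFactorial d : ℕ) : ℚ[X]) := by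
  intro d
  induction d with
  | zero => simp [ffq_zero]
  | succ d ih =>
      rw [ffq_succ, ih, Nat.descFactorial_succ]
      by_cases h : d < c
      · push_cast [Nat.cast_sub (le_of_lt h)]
        ring
      · have h0 : c - d = 0 := by omega
        rw [h0]
        rcases eq_or_lt_of_le (not_lt.1 h) with hcd | hcd
        · simp [hcd]
        · have hz : c.descFactorial d = 0 := Nat.descFactorial_eq_zero_iff_lt.2 hcd
          simp [hz]

lemma ffq_vand (Y Z : ℚ[X]) : ∀ m : ℕ, ffq (Y + Z) m =
    ∑ i ∈ Finset.range (m + 1), (m.choose i : ℚ[X]) * ffq Y i * ffq Z (m - i) := by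
  intro m
  induction m with
  | zero => simp [ffq_zero]
  | succ m ih =>
      have h1 : ffq (Y + Z) (m + 1)
          = ∑ i ∈ Finset.range (m + 1),
              (m.choose i : ℚ[X]) * ffq Y i * ffq Z (m - i) * (Y + Z - (m : ℚ[X])) := by
        rw [ffq_succ, ih, Finset.sum_mul]
      rw [h1]
      have h2 : ∀ i ∈ Finset.range (m + 1),
          (m.choose i : ℚ[X]) * ffq Y i * ffq Z (m - i) * (Y + Z - (m : ℚ[X]))
            = (m.choose i : ℚ[X]) * (ffq Y (i + 1) * ffq Z (m - i))
              + (m.choose i : ℚ[X]) * (ffq Y i * ffq Z (m + 1 - i)) := by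
        intro i hi
        have hle : i ≤ m := by simpa [Nat.lt_succ_iff] using hi
        have hmi : m + 1 - i = (m - i) + 1 := by omega
        have hc : ((m - i : ℕ) : ℚ[X]) = (m : ℚ[X]) - (i : ℚ[X]) := by
          push_cast [Nat.cast_sub hle]; ring
        rw [hmi, ffq_succ, ffq_succ, hc]
        ring
      rw [Finset.sum_congr rfl h2, Finset.sum_add_distrib]
      -- target: = ∑ i in range (m+2), C(m+1,i) ffq Y i ffq Z (m+1-i)
      have hB : ∑ i ∈ Finset.range (m + 1 + 1),
            ((m+1).choose i : ℚ[X]) * ffq Y i * ffq Z (m + 1 - i)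
          = ffq Z (m + 1) + ∑ i ∈ Finset.range (m + 1),
              (((m.choose i : ℚ[X]) + (m.choose (i+1) : ℚ[X])) * (ffq Y (i+1) * ffq Z (m - i))) := by
        rw [Finset.sum_range_succ']
        have : ∀ i ∈ Finset.range (m + 1),
            ((m+1).choose (i+1) : ℚ[X]) * ffq Y (i+1) * ffq Z (m + 1 - (i+1))
            = ((m.choose i : ℚ[X]) + (m.choose (i+1) : ℚ[X])) * (ffq Y (i+1) * ffq Z (m - i)) := by
          intro i hi
          have : m + 1 - (i + 1) = m - i := by omega
          rw [this, Nat.choose_succ_succ]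
          push_cast
          ring
        rw [Finset.sum_congr rfl this]
        simp [ffq_zero, add_comm]
      rw [hB]
      have hA : ∑ i ∈ Finset.range (m + 1), (m.choose i : ℚ[X]) * (ffq Y i * ffq Z (m + 1 - i))
          = ffq Z (m + 1) + ∑ i ∈ Finset.range m,
              (m.choose (i+1) : ℚ[X]) * (ffq Y (i+1) * ffq Z (m - i)) := by
        rw [Finset.sum_range_succ']
        have : ∀ i ∈ Finset.range m,
            (m.choose (i+1) : ℚ[X]) * (ffq Y (i+1) * ffq Z (m + 1 - (i+1)))
            = (m.choose (i+1) : ℚ[X]) * (ffq Y (i+1) * ffq Z (m - i)) := by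
          intro i hi
          have : m + 1 - (i + 1) = m - i := by omega
          rw [this]
        rw [Finset.sum_congr rfl this]
        simp [ffq_zero, add_comm]
      rw [hA]
      have hC : ∑ i ∈ Finset.range (m + 1),
            (m.choose (i+1) : ℚ[X]) * (ffq Y (i+1) * ffq Z (m - i))
          = ∑ i ∈ Finset.range m, (m.choose (i+1) : ℚ[X]) * (ffq Y (i+1) * ffq Z (m - i)) := by
        rw [Finset.sum_range_succ]
        simp
      rw [Finset.sum_congr rfl (fun i _ => by push_cast [add_mul]; ring :
        ∀ i ∈ Finset.range (m+1),
          (((m.choose i : ℚ[X]) + (m.choose (i+1) : ℚ[X])) * (ffq Y (i+1) * ffq Z (m - i)))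
          = (m.choose i : ℚ[X]) * (ffq Y (i+1) * ffq Z (m - i))
            + (m.choose (i+1) : ℚ[X]) * (ffq Y (i+1) * ffq Z (m - i))), Finset.sum_add_distrib, ← hC]
      ring


noncomputable def akk (n k : ℕ) : ℚ := (k.factorial : ℚ) * (n.choose k : ℚ) ^ 2 / 2 ^ k

lemma scalar_id (n j : ℕ) (hj : j ≤ n) :
    ∑ k ∈ Finset.range (n + 1),
      akk n k * (-1) ^ k * ((n - k).choose j : ℚ) * (((n - k).descFactorial (n - k - j) : ℕ) : ℚ)
      = akk n (n - j) := by
  have hsub : Finset.range (n - j + 1) ⊆ Finset.range (n + 1) := by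
    apply Finset.range_subset_range.2; omega
  rw [← Finset.sum_subset hsub ?hzero]
  case hzero =>
    intro k hk hk'
    have h1 : k ≤ n := by simpa [Nat.lt_succ_iff] using Finset.mem_range.1 hk
    have h2 : n - k < j := by
      simp only [Finset.mem_range] at hk'; omega
    rw [Nat.choose_eq_zero_of_lt h2]
    simp
  have hterm : ∀ k ∈ Finset.range (n - j + 1),
      akk n k * (-1) ^ k * ((n - k).choose j : ℚ) * (((n - k).descFactorial (n - k - j) : ℕ) : ℚ)
      = akk n (n - j) * 2 ^ (n - j) * ((-1/2 : ℚ) ^ k * (1:ℚ) ^ (n - j - k) * ((n - j).choose k : ℚ)) := by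
    intro k hk
    have hkm : k ≤ n - j := by simpa [Nat.lt_succ_iff] using Finset.mem_range.1 hk
    have hkn : k ≤ n := by omega
    have hjk : j ≤ n - k := by omega
    -- descFactorial fact
    have hD : j.factorial * (n - k).descFactorial (n - k - j) = (n - k).factorial := by
      have h := Nat.factorial_mul_descFactorial (show n - k - j ≤ n - k by omega)
      rwa [show n - k - (n - k - j) = j by omega] at h
    -- trinomial
    have tri : n.choose k * (n - k).choose j = n.choose j * (n - j).choose k := by
      have h1 := Nat.choose_mul (n := n) (show k ≤ k + j by omega)
      have h2 := Nat.choose_mul (n := n) (show j ≤ k + j by omega)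
      rw [show k + j - k = j by omega] at h1
      rw [show k + j - j = k by omega] at h2
      have h3 : (k + j).choose k = (k + j).choose j := by
        have := Nat.choose_symm (show j ≤ k + j by omega)
        rwa [show k + j - j = k by omega] at this
      rw [h3] at h1
      exact h1.symm.trans h2
    have e1 := Nat.choose_mul_factorial_mul_factorial hkn
    have e2 := Nat.choose_mul_factorial_mul_factorial hj
    have hN : k.factorial * (n.choose k) ^ 2 * ((n - k).choose j) * (n - k).factorial
        = (n - j).factorial * (n.choose j) ^ 2 * ((n - j).choose k) * j.factorial := by
      calc k.factorial * (n.choose k) ^ 2 * ((n - k).choose j) * (n - k).factorial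
          = (n.choose k * (n - k).choose j) * (n.choose k * k.factorial * (n - k).factorial) := by
            ring
        _ = (n.choose j * (n - j).choose k) * n.factorial := by rw [tri, e1]
        _ = (n.choose j * (n - j).choose k) * (n.choose j * j.factorial * (n - j).factorial) := by
            rw [e2]
        _ = (n - j).factorial * (n.choose j) ^ 2 * ((n - j).choose k) * j.factorial := by ring
    have hQ : (k.factorial : ℚ) * (n.choose k : ℚ) ^ 2 * ((n - k).choose j : ℚ)
          * (((n - k).descFactorial (n - k - j) : ℕ) : ℚ)
        = ((n - j).factorial : ℚ) * (n.choose j : ℚ) ^ 2 * ((n - j).choose k : ℚ) := by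
      have hDq : ((n - k).descFactorial (n - k - j) : ℚ) * (j.factorial : ℚ)
          = ((n - k).factorial : ℚ) := by
        exact_mod_cast congrArg (Nat.cast (R := ℚ)) (by rw [Nat.mul_comm] at hD; exact hD)
      have hNq : (k.factorial : ℚ) * (n.choose k : ℚ) ^ 2 * ((n - k).choose j : ℚ)
            * ((n - k).factorial : ℚ)
          = ((n - j).factorial : ℚ) * (n.choose j : ℚ) ^ 2 * ((n - j).choose k : ℚ)
            * (j.factorial : ℚ) := by exact_mod_cast hN
      apply mul_right_cancel₀ (show (j.factorial : ℚ) ≠ 0 from Nat.cast_ne_zero.2 j.factorial_ne_zero)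
      calc (k.factorial : ℚ) * (n.choose k : ℚ) ^ 2 * ((n - k).choose j : ℚ)
            * (((n - k).descFactorial (n - k - j) : ℕ) : ℚ) * (j.factorial : ℚ)
          = (k.factorial : ℚ) * (n.choose k : ℚ) ^ 2 * ((n - k).choose j : ℚ)
            * ((((n - k).descFactorial (n - k - j) : ℕ) : ℚ) * (j.factorial : ℚ)) := by ring
        _ = (k.factorial : ℚ) * (n.choose k : ℚ) ^ 2 * ((n - k).choose j : ℚ)
            * ((n - k).factorial : ℚ) := by rw [hDq]
        _ = ((n - j).factorial : ℚ) * (n.choose j : ℚ) ^ 2 * ((n - j).choose k : ℚ)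
            * (j.factorial : ℚ) := hNq
    unfold akk
    rw [Nat.choose_symm hj]
    have h2k : (2 : ℚ) ^ k ≠ 0 := by positivity
    have h2m : (2 : ℚ) ^ (n - j) ≠ 0 := by positivity
    field_simp
    have h : (-1/2 : ℚ) ^ k * 2 ^ k = (-1) ^ k := by rw [← mul_pow]; norm_num
    linear_combination ((-1 : ℚ) ^ k) * hQ
      - ((n - j).factorial : ℚ) * (n.choose j : ℚ) ^ 2 * ((n - j).choose k : ℚ) * h
  rw [Finset.sum_congr rfl hterm, ← Finset.mul_sum, ← add_pow (-1/2 : ℚ) 1 (n - j)]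
  rw [show (-1/2 + 1 : ℚ) = 2⁻¹ by norm_num, inv_pow, mul_assoc,
    mul_inv_cancel₀ (by positivity : (2:ℚ) ^ (n - j) ≠ 0), mul_one]

lemma key_sum (n : ℕ) (Y : ℚ[X]) :
    ∑ k ∈ Finset.range (n + 1), C (akk n k) * ffq Y (n - k)
      = ∑ k ∈ Finset.range (n + 1),
          C (akk n k) * (-1) ^ k * ffq (Y + ((n - k : ℕ) : ℚ[X])) (n - k) := by
  have hR : ∀ k ∈ Finset.range (n + 1),
      C (akk n k) * (-1) ^ k * ffq (Y + ((n - k : ℕ) : ℚ[X])) (n - k)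
      = ∑ j ∈ Finset.range (n + 1),
          C (akk n k * (-1) ^ k * ((n - k).choose j : ℚ)
              * (((n - k).descFactorial (n - k - j) : ℕ) : ℚ)) * ffq Y j := by
    intro k hk
    have hkn : k ≤ n := by simpa [Nat.lt_succ_iff] using Finset.mem_range.1 hk
    rw [ffq_vand Y ((n - k : ℕ) : ℚ[X]) (n - k)]
    rw [← Finset.sum_subset (Finset.range_subset_range.2 (by omega : n - k + 1 ≤ n + 1)) ?hz]
    case hz =>
      intro j hj hj'
      have : n - k < j := by
        simp only [Finset.mem_range] at hj'; omega
      rw [Nat.choose_eq_zero_of_lt this]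
      simp
    rw [Finset.mul_sum]
    apply Finset.sum_congr rfl
    intro j hj
    rw [ffq_natCast]
    simp only [map_mul, map_pow, map_neg, map_one, C_eq_natCast]
    ring
  rw [Finset.sum_congr rfl hR, Finset.sum_comm,
    ← Finset.sum_range_reflect (fun k => C (akk n k) * ffq Y (n - k)) (n + 1)]
  apply Finset.sum_congr rfl
  intro j hj
  have hjn : j ≤ n := by simpa [Nat.lt_succ_iff] using Finset.mem_range.1 hj
  rw [show n + 1 - 1 - j = n - j by omega, show n - (n - j) = j by omega,
    ← Finset.sum_mul, ← map_sum, scalar_id n j hjn]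

theorem sum_vanishes' (n : ℕ) (hn : 1 ≤ n) :
    ∑ k ∈ Finset.range (n + 1),
      C (((k.factorial * (n - k) : ℕ) : ℚ) / 2 ^ k) * ((n.choose k : ℚ[X])) ^ 2 *
        (∏ j ∈ Finset.range (n - k - 1), (X - (j : ℚ[X])) -
          (-1) ^ k * ∏ j ∈ Finset.range (n - k - 1), (X + ((n - k : ℕ) : ℚ[X]) - (j : ℚ[X]))) = 0 := by
  have hstep : ∀ k ∈ Finset.range (n + 1),
      C (((k.factorial * (n - k) : ℕ) : ℚ) / 2 ^ k) * ((n.choose k : ℚ[X])) ^ 2 *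
        (∏ j ∈ Finset.range (n - k - 1), (X - (j : ℚ[X])) -
          (-1) ^ k * ∏ j ∈ Finset.range (n - k - 1), (X + ((n - k : ℕ) : ℚ[X]) - (j : ℚ[X])))
      = C (akk n k) * ffq (X + 1) (n - k) - C (akk n k) * ffq X (n - k)
        - (C (akk n k) * (-1) ^ k * ffq (X + 1 + ((n - k : ℕ) : ℚ[X])) (n - k)
          - C (akk n k) * (-1) ^ k * ffq (X + ((n - k : ℕ) : ℚ[X])) (n - k)) := by
    intro k hk
    have hkn : k ≤ n := by simpa [Nat.lt_succ_iff] using Finset.mem_range.1 hk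
    by_cases hke : k = n
    · subst hke
      simp [ffq_zero]
    · have hkn' : k < n := lt_of_le_of_ne hkn hke
      have hm : n - k = (n - k - 1) + 1 := by omega
      have e1 : ∏ j ∈ Finset.range (n - k - 1), (X - (j : ℚ[X])) = ffq X (n - k - 1) := rfl
      have e2 : ∏ j ∈ Finset.range (n - k - 1), (X + ((n - k : ℕ) : ℚ[X]) - (j : ℚ[X]))
          = ffq (X + ((n - k : ℕ) : ℚ[X])) (n - k - 1) := rfl
      rw [e1, e2]
      have d1 : ffq (X + 1) (n - k) - ffq X (n - k)
          = (((n - k - 1 : ℕ) : ℚ[X]) + 1) * ffq X (n - k - 1) := by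
        obtain ⟨m, hm'⟩ : ∃ m, n - k = m + 1 := ⟨n - k - 1, by omega⟩
        rw [hm']
        simp only [Nat.add_sub_cancel]
        exact ffq_diff X m
      have d2 : ffq (X + 1 + ((n - k : ℕ) : ℚ[X])) (n - k) - ffq (X + ((n - k : ℕ) : ℚ[X])) (n - k)
          = (((n - k - 1 : ℕ) : ℚ[X]) + 1) * ffq (X + ((n - k : ℕ) : ℚ[X])) (n - k - 1) := by
        obtain ⟨m, hm'⟩ : ∃ m, n - k = m + 1 := ⟨n - k - 1, by omega⟩
        rw [hm']
        simp only [Nat.add_sub_cancel]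
        rw [add_right_comm X 1 (((m + 1 : ℕ) : ℚ[X]))]
        exact ffq_diff (X + ((m + 1 : ℕ) : ℚ[X])) m
      have hEF : C (((k.factorial * (n - k) : ℕ) : ℚ) / 2 ^ k) * ((n.choose k : ℚ[X])) ^ 2
          = C (akk n k) * (((n - k - 1 : ℕ) : ℚ[X]) + 1) := by
        have hc : (((n - k - 1 : ℕ) : ℚ[X]) + 1) = C (((n - k : ℕ) : ℚ)) := by
          rw [C_eq_natCast]
          have : (n - k : ℕ) = (n - k - 1) + 1 := hm
          rw [this]
          push_cast
          ring
        rw [hc, show ((n.choose k : ℚ[X])) ^ 2 = C ((n.choose k : ℚ) ^ 2) by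
          simp [map_pow, C_eq_natCast], ← map_mul, ← map_mul]
        congr 1
        unfold akk
        push_cast
        ring
      calc C (((k.factorial * (n - k) : ℕ) : ℚ) / 2 ^ k) * ((n.choose k : ℚ[X])) ^ 2 *
            (ffq X (n - k - 1) - (-1) ^ k * ffq (X + ((n - k : ℕ) : ℚ[X])) (n - k - 1))
          = C (akk n k) * ((((n - k - 1 : ℕ) : ℚ[X]) + 1) *
              (ffq X (n - k - 1) - (-1) ^ k * ffq (X + ((n - k : ℕ) : ℚ[X])) (n - k - 1))) := by
            rw [← mul_assoc, ← hEF]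
        _ = _ := by
            linear_combination (- C (akk n k)) * d1 + C (akk n k) * (-1) ^ k * d2
  rw [Finset.sum_congr rfl hstep, Finset.sum_sub_distrib, Finset.sum_sub_distrib,
    Finset.sum_sub_distrib, ← key_sum n X, ← key_sum n (X + 1)]
  ring
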